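/- Let K be a finite set of nonnegative integers with 0 ∈ K, |K| = k ≥ 2, whose elements have greatest common divisor 1. The following are equivalent: (a) the system A(K) has a nontrivial periodic complex solution; (b) there exists an integer n > k and a nonzero function x : ℤ/nℤ → ℂ such that ∑_{s ∈ K} x(g + s̄) = 0 for every g ∈ ℤ/nℤ (where s̄ is the image of s in ℤ/nℤ); (c) there exists an integer m ≥ 2 such that the m-th cyclotomic polynomial Φ_m(X) divides the mask polynomial P_K(X) = ∑_{s ∈ K} X^s in ℤ[X]; (d) the system A(K) has a nontrivial periodic solution taking values in ℤ. -/

import Mathlib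

open Polynomial

/-- A `p`-periodic function of `ℤ` depends only on the residue mod `p`. -/
lemma per_congr {A : Type*} (p : ℕ) (x : ℤ → A) (hper : ∀ n : ℤ, x (n + (p : ℤ)) = x n)
    {a b : ℤ} (h : (a : ZMod p) = (b : ZMod p)) : x a = x b := by
  have key : ∀ t : ℤ, ∀ n : ℤ, x (n + (p : ℤ) * t) = x n := by
    intro t
    induction t using Int.induction_on with
    | zero => simp
    | succ i ih =>
      intro n
      have h1 : n + (p : ℤ) * (i + 1) = (n + (p : ℤ) * i) + (p : ℤ) := by ring
      rw [h1, hper, ih]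
    | pred i ih =>
      intro n
      have h1 : n + (p : ℤ) * (-(i : ℤ) - 1) = (n + (p : ℤ) * (-(i : ℤ))) - (p : ℤ) := by ring
      have h2 := hper ((n + (p : ℤ) * (-i)) - (p : ℤ))
      rw [sub_add_cancel] at h2
      rw [h1, ← h2, ih]
  have hmod : a ≡ b [ZMOD (p : ℤ)] := (ZMod.intCast_eq_intCast_iff a b p).mp h
  obtain ⟨t, ht⟩ := Int.ModEq.dvd hmod
  have : b = a + (p : ℤ) * t := by linarith
  rw [this, key]

/-- DFT of a shift. -/
lemma dft_shift {P : ℕ} [NeZero P] (y : ZMod P → ℂ) (s t : ZMod P) :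
    ZMod.dft (fun g ↦ y (g + s)) t = ZMod.stdAddChar (s * t) * ZMod.dft y t := by
  rw [ZMod.dft_apply, ZMod.dft_apply, Finset.mul_sum]
  rw [← Equiv.sum_comp (Equiv.subRight s) (fun j => ZMod.stdAddChar (-(j * t)) • y (j + s))]
  apply Finset.sum_congr rfl
  intro h _
  simp only [Equiv.subRight_apply, sub_add_cancel, smul_eq_mul]
  have h1 : -((h - s) * t) = s * t + -(h * t) := by ring
  rw [h1, AddChar.map_add_eq_mul, mul_assoc]

section implications

/-- (a) → (c) -/
lemma imp_a_c (K : Finset ℕ) (k : ℕ) (hcard : K.card = k) (hk : 2 ≤ k)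
    (H : ∃ x : ℤ → ℂ, x ≠ 0 ∧ (∃ p : ℤ, 1 ≤ p ∧ ∀ n : ℤ, x (n + p) = x n) ∧
        ∀ n : ℤ, ∑ s ∈ K, x (n + (s : ℤ)) = 0) :
    ∃ m : ℕ, 2 ≤ m ∧ Polynomial.cyclotomic m ℤ ∣ ∑ s ∈ K, Polynomial.X ^ s := by
  obtain ⟨x, hx0, ⟨p, hp1, hper⟩, hsum⟩ := H
  lift p to ℕ using (by omega) with P hP
  have hP1 : 1 ≤ P := by exact_mod_cast hp1
  haveI : NeZero P := ⟨by omega⟩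
  have hper' : ∀ n : ℤ, x (n + (P : ℤ)) = x n := hper
  set y : ZMod P → ℂ := fun g ↦ x (g.val) with hy
  have bridge : ∀ n : ℤ, y ((n : ZMod P)) = x n := by
    intro n
    apply per_congr P x hper'
    push_cast
    simp [ZMod.natCast_val, ZMod.cast_id]
  have hy0 : y ≠ 0 := by
    obtain ⟨n, hn⟩ := Function.ne_iff.mp hx0
    intro hcontra
    apply hn
    rw [← bridge n, hcontra]
    rfl
  have hcond : ∀ g : ZMod P, ∑ s ∈ K, y (g + (s : ZMod P)) = 0 := by
    intro g
    obtain ⟨n, rfl⟩ := ZMod.intCast_surjective g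
    have : ∀ s ∈ K, y ((n : ZMod P) + (s : ZMod P)) = x (n + (s : ℤ)) := by
      intro s _
      rw [← bridge (n + s)]
      push_cast
      ring_nf
    rw [Finset.sum_congr rfl this]
    exact hsum n
  -- DFT step
  have hdft : ZMod.dft y ≠ 0 := by
    intro hcontra
    exact hy0 ((LinearEquiv.map_eq_zero_iff _).mp hcontra)
  obtain ⟨t, ht⟩ := Function.ne_iff.mp hdft
  have hsum0 : (∑ s ∈ K, (fun g ↦ y (g + (s : ZMod P)))) = (0 : ZMod P → ℂ) := by
    funext g
    rw [Finset.sum_apply]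
    exact hcond g
  have hchar : (∑ s ∈ K, ZMod.stdAddChar ((s : ZMod P) * t)) * ZMod.dft y t = 0 := by
    rw [Finset.sum_mul]
    have : ∀ s ∈ K, ZMod.stdAddChar ((s : ZMod P) * t) * ZMod.dft y t
        = ZMod.dft (fun g ↦ y (g + (s : ZMod P))) t := fun s _ => (dft_shift y _ t).symm
    rw [Finset.sum_congr rfl this, ← Finset.sum_apply, ← map_sum, hsum0]
    simp
  have hsumχ : ∑ s ∈ K, ZMod.stdAddChar ((s : ZMod P) * t) = 0 :=
    (mul_eq_zero.mp hchar).resolve_right ht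
  set ζ : ℂ := ZMod.stdAddChar t with hζdef
  have hpow : ∀ s : ℕ, ZMod.stdAddChar ((s : ZMod P) * t) = ζ ^ s := by
    intro s
    rw [show ((s : ZMod P) * t) = s • t by simp [nsmul_eq_mul], AddChar.map_nsmul_eq_pow]
  have hroot : ∑ s ∈ K, ζ ^ s = 0 := by
    rw [← Finset.sum_congr rfl (fun s _ => hpow s)]
    exact hsumχ
  have hζP : ζ ^ P = 1 := by
    rw [← AddChar.map_nsmul_eq_pow]
    have : (P : ℕ) • t = 0 := by simp [nsmul_eq_mul, ZMod.natCast_self]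
    rw [this, AddChar.map_zero_eq_one]
  have hne1 : ζ ≠ 1 := by
    intro hcontra
    rw [hcontra] at hroot
    simp only [one_pow, Finset.sum_const, nsmul_eq_mul, mul_one] at hroot
    have : (K.card : ℂ) ≠ 0 := by
      simp only [ne_eq, Nat.cast_eq_zero]
      omega
    exact this hroot
  have hfin : IsOfFinOrder ζ := isOfFinOrder_iff_pow_eq_one.mpr ⟨P, by omega, hζP⟩
  have hm0 : 0 < orderOf ζ := hfin.orderOf_pos
  have hm1 : orderOf ζ ≠ 1 := fun h => hne1 (orderOf_eq_one_iff.mp h)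
  have hprim : IsPrimitiveRoot ζ (orderOf ζ) := IsPrimitiveRoot.orderOf ζ
  have hmin : Polynomial.cyclotomic (orderOf ζ) ℤ = minpoly ℤ ζ :=
    Polynomial.cyclotomic_eq_minpoly hprim hm0
  have hint : IsIntegral ℤ ζ := by
    refine ⟨X ^ (orderOf ζ) - 1, Polynomial.monic_X_pow_sub_C 1 (by omega), ?_⟩
    simp [hprim.pow_eq_one]
  have hdvd : minpoly ℤ ζ ∣ ∑ s ∈ K, Polynomial.X ^ s := by
    apply minpoly.isIntegrallyClosed_dvd hint
    simpa using hroot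
  exact ⟨orderOf ζ, by omega, hmin ▸ hdvd⟩

/-- (c) → (b) -/
lemma imp_c_b (K : Finset ℕ) (k : ℕ)
    (H : ∃ m : ℕ, 2 ≤ m ∧ Polynomial.cyclotomic m ℤ ∣ ∑ s ∈ K, Polynomial.X ^ s) :
    ∃ n : ℕ, k < n ∧ ∃ x : ZMod n → ℂ, x ≠ 0 ∧
        ∀ g : ZMod n, ∑ s ∈ K, x (g + (s : ZMod n)) = 0 := by
  obtain ⟨m, hm, hdvd⟩ := H
  set n : ℕ := m * (k + 1) with hndef
  have hkn : k < n := by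
    calc k < 2 * (k + 1) := by omega
    _ ≤ m * (k + 1) := Nat.mul_le_mul_right _ hm
  haveI : NeZero n := ⟨by positivity⟩
  have hmn : m ∣ n := ⟨k + 1, rfl⟩
  set ζ : ℂ := Complex.exp (2 * Real.pi * Complex.I / m) with hζdef
  have hprim : IsPrimitiveRoot ζ m := Complex.isPrimitiveRoot_exp m (by omega)
  have hζm : ζ ^ m = 1 := hprim.pow_eq_one
  have hPK : ∑ s ∈ K, ζ ^ s = 0 := by
    obtain ⟨Q, hQ⟩ := hdvd
    have := congrArg (Polynomial.aeval ζ) hQ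
    simp only [map_sum, map_pow, Polynomial.aeval_X, map_mul] at this
    rw [this]
    have hcyc : Polynomial.aeval ζ (Polynomial.cyclotomic m ℤ) = 0 := by
      rw [Polynomial.aeval_def, Polynomial.eval₂_eq_eval_map, Polynomial.map_cyclotomic]
      exact hprim.isRoot_cyclotomic (by omega)
    rw [hcyc, zero_mul]
  have hmod : ∀ a b : ℕ, a % m = b % m → ζ ^ a = ζ ^ b := by
    have haux : ∀ a : ℕ, ζ ^ a = ζ ^ (a % m) := by
      intro a
      conv_lhs => rw [← Nat.div_add_mod a m]
      rw [pow_add, pow_mul, hζm, one_pow, one_mul]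
    intro a b hab
    rw [haux a, haux b, hab]
  refine ⟨n, hkn, fun g => ζ ^ g.val, ?_, ?_⟩
  · intro hcontra
    have := congrFun hcontra 0
    simp [ZMod.val_zero] at this
  · intro g
    have hval : ∀ s ∈ K, (g + (s : ZMod n)).val % m = (g.val + s) % m := by
      intro s _
      rw [ZMod.val_add, ZMod.val_natCast, Nat.mod_mod_of_dvd _ hmn]
      conv_rhs => rw [Nat.add_mod]
      conv_lhs => rw [Nat.add_mod, Nat.mod_mod_of_dvd s hmn]
    have : ∀ s ∈ K, ζ ^ (g + (s : ZMod n)).val = ζ ^ g.val * ζ ^ s := by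
      intro s hs
      rw [hmod _ _ (hval s hs), pow_add]
    rw [Finset.sum_congr rfl this, ← Finset.mul_sum, hPK, mul_zero]

/-- (b) → (a) -/
lemma imp_b_a (K : Finset ℕ) (k : ℕ)
    (H : ∃ n : ℕ, k < n ∧ ∃ x : ZMod n → ℂ, x ≠ 0 ∧
        ∀ g : ZMod n, ∑ s ∈ K, x (g + (s : ZMod n)) = 0) :
    ∃ x : ℤ → ℂ, x ≠ 0 ∧ (∃ p : ℤ, 1 ≤ p ∧ ∀ n : ℤ, x (n + p) = x n) ∧
        ∀ n : ℤ, ∑ s ∈ K, x (n + (s : ℤ)) = 0 := by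
  obtain ⟨n, hkn, x, hx0, hcond⟩ := H
  haveI : NeZero n := ⟨by omega⟩
  refine ⟨fun t => x ((t : ZMod n)), ?_, ⟨(n : ℤ), by exact_mod_cast (by omega : 1 ≤ n), ?_⟩, ?_⟩
  · obtain ⟨g, hg⟩ := Function.ne_iff.mp hx0
    apply Function.ne_iff.mpr
    refine ⟨(g.val : ℤ), ?_⟩
    have : (((g.val : ℤ)) : ZMod n) = g := by
      push_cast
      simp [ZMod.natCast_val, ZMod.cast_id]
    simpa [this] using hg
  · intro t
    show x (((t + (n : ℤ) : ℤ) : ZMod n)) = x ((t : ZMod n))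
    congr 1
    push_cast
    simp
  · intro t
    show ∑ s ∈ K, x (((t + (s : ℤ) : ℤ) : ZMod n)) = 0
    have : ∀ s ∈ K, x (((t + (s : ℤ) : ℤ) : ZMod n)) = x ((t : ZMod n) + (s : ZMod n)) := by
      intro s _
      congr 1
      push_cast
      ring
    rw [Finset.sum_congr rfl (fun s hs => this s hs)]
    exact hcond _

/-- (c) → (d) -/
lemma imp_c_d (K : Finset ℕ)
    (H : ∃ m : ℕ, 2 ≤ m ∧ Polynomial.cyclotomic m ℤ ∣ ∑ s ∈ K, Polynomial.X ^ s) :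
    ∃ x : ℤ → ℤ, x ≠ 0 ∧ (∃ p : ℤ, 1 ≤ p ∧ ∀ n : ℤ, x (n + p) = x n) ∧
        ∀ n : ℤ, ∑ s ∈ K, x (n + (s : ℤ)) = 0 := by
  obtain ⟨m, hm, hdvd⟩ := H
  set Φ : Polynomial ℤ := Polynomial.cyclotomic m ℤ with hΦdef
  have hmon : Φ.Monic := Polynomial.cyclotomic.monic m ℤ
  set x : ℤ → ℤ := fun n => ((Polynomial.X : Polynomial ℤ) ^ ((n % (m : ℤ)).toNat) %ₘ Φ).coeff 0
    with hxdef
  have hm0 : (0 : ℤ) < (m : ℤ) := by exact_mod_cast (by omega : 0 < m)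
  refine ⟨x, ?_, ⟨(m : ℤ), by exact_mod_cast (by omega : 1 ≤ m), ?_⟩, ?_⟩
  · apply Function.ne_iff.mpr
    refine ⟨0, ?_⟩
    have h1 : ((0 : ℤ) % (m : ℤ)).toNat = 0 := by simp
    have h2 : ((1 : Polynomial ℤ) %ₘ Φ) = 1 := by
      rw [Polynomial.modByMonic_eq_self_iff hmon]
      rw [Polynomial.degree_one, Polynomial.degree_cyclotomic]
      exact_mod_cast Nat.totient_pos.mpr (by omega)
    simp only [hxdef, h1, pow_zero, h2, Polynomial.coeff_one_zero]
    exact one_ne_zero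
  · intro n
    have : (n + (m : ℤ)) % (m : ℤ) = n % (m : ℤ) := by
      have h1 : n + (m : ℤ) = n + (m : ℤ) * 1 := by ring
      rw [h1, Int.add_mul_emod_self_left]
    simp only [hxdef, this]
  · intro n
    set a : ℕ := (n % (m : ℤ)).toNat with hadef
    have ha : (a : ℤ) = n % (m : ℤ) := Int.toNat_of_nonneg (Int.emod_nonneg n (by omega))
    have he : ∀ s : ℕ, ((n + (s : ℤ)) % (m : ℤ)).toNat = (a + s) % m := by
      intro s
      have hcast : (((a + s) % m : ℕ) : ℤ) = (n + (s : ℤ)) % (m : ℤ) := by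
        push_cast
        rw [ha, Int.emod_add_emod]
      rw [← hcast, Int.toNat_natCast]
    have hdvd2 : Φ ∣ ∑ s ∈ K, (Polynomial.X : Polynomial ℤ) ^ ((a + s) % m) := by
      have key : ∀ s ∈ K, Φ ∣ (Polynomial.X : Polynomial ℤ) ^ (a + s) - X ^ ((a + s) % m) := by
        intro s _
        have hq : m * ((a + s) / m) + (a + s) % m = a + s := Nat.div_add_mod _ _
        have h1 : (Polynomial.X : Polynomial ℤ) ^ (a + s) - X ^ ((a + s) % m)
            = ((X ^ m) ^ ((a + s) / m) - 1) * X ^ ((a + s) % m) := by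
          have hx : (Polynomial.X : Polynomial ℤ) ^ (a + s)
              = (X ^ m) ^ ((a + s) / m) * X ^ ((a + s) % m) := by
            conv_lhs => rw [← hq]
            rw [pow_add, pow_mul]
          rw [hx]
          ring
        rw [h1]
        apply Dvd.dvd.mul_right
        have h2 : (Polynomial.X : Polynomial ℤ) ^ m - 1 ∣ (X ^ m) ^ ((a + s) / m) - 1 := by
          simpa using sub_dvd_pow_sub_pow ((Polynomial.X : Polynomial ℤ) ^ m) 1 ((a + s) / m)
        exact (Polynomial.cyclotomic.dvd_X_pow_sub_one m ℤ).trans h2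
      have hsplit : ∑ s ∈ K, (Polynomial.X : Polynomial ℤ) ^ ((a + s) % m)
          = X ^ a * (∑ s ∈ K, X ^ s) - ∑ s ∈ K, (X ^ (a + s) - X ^ ((a + s) % m)) := by
        rw [Finset.mul_sum, ← Finset.sum_sub_distrib]
        apply Finset.sum_congr rfl
        intro s _
        rw [← pow_add]
        ring
      rw [hsplit]
      exact dvd_sub (hdvd.mul_left _) (Finset.dvd_sum key)
    have hsum : ∑ s ∈ K, x (n + (s : ℤ))
        = ((∑ s ∈ K, (Polynomial.X : Polynomial ℤ) ^ ((a + s) % m)) %ₘ Φ).coeff 0 := by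
      have : (∑ s ∈ K, (Polynomial.X : Polynomial ℤ) ^ ((a + s) % m)) %ₘ Φ
          = ∑ s ∈ K, ((Polynomial.X : Polynomial ℤ) ^ ((a + s) % m) %ₘ Φ) := by
        have h3 := map_sum (Polynomial.modByMonicHom Φ)
          (fun s => (Polynomial.X : Polynomial ℤ) ^ ((a + s) % m)) K
        simp only [Polynomial.modByMonicHom_apply] at h3
        exact h3
      rw [this, Polynomial.finset_sum_coeff]
      apply Finset.sum_congr rfl
      intro s _
      simp only [hxdef, he s]
    rw [hsum, (Polynomial.modByMonic_eq_zero_iff_dvd hmon).mpr hdvd2]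
    simp

/-- (d) → (a) -/
lemma imp_d_a (K : Finset ℕ)
    (H : ∃ x : ℤ → ℤ, x ≠ 0 ∧ (∃ p : ℤ, 1 ≤ p ∧ ∀ n : ℤ, x (n + p) = x n) ∧
        ∀ n : ℤ, ∑ s ∈ K, x (n + (s : ℤ)) = 0) :
    ∃ x : ℤ → ℂ, x ≠ 0 ∧ (∃ p : ℤ, 1 ≤ p ∧ ∀ n : ℤ, x (n + p) = x n) ∧
        ∀ n : ℤ, ∑ s ∈ K, x (n + (s : ℤ)) = 0 := by
  obtain ⟨x, hx0, ⟨p, hp1, hper⟩, hsum⟩ := H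
  refine ⟨fun n => ((x n : ℤ) : ℂ), ?_,
    ⟨p, hp1, fun n => by show ((x (n + p) : ℤ) : ℂ) = ((x n : ℤ) : ℂ); rw [hper]⟩, fun n => ?_⟩
  · obtain ⟨n, hn⟩ := Function.ne_iff.mp hx0
    apply Function.ne_iff.mpr
    refine ⟨n, ?_⟩
    simp only [Pi.zero_apply]
    exact_mod_cast hn
  · show ∑ s ∈ K, ((x (n + (s : ℤ)) : ℤ) : ℂ) = 0
    have := hsum n
    exact_mod_cast congrArg (fun z : ℤ => (z : ℂ)) this

end implications

theorem stmt_3 (K : Finset ℕ) (h0 : 0 ∈ K) (k : ℕ) (hcard : K.card = k) (hk : 2 ≤ k)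
    (hgcd : K.gcd id = 1) :
    List.TFAE
      [ ∃ x : ℤ → ℂ, x ≠ 0 ∧ (∃ p : ℤ, 1 ≤ p ∧ ∀ n : ℤ, x (n + p) = x n) ∧
          ∀ n : ℤ, ∑ s ∈ K, x (n + (s : ℤ)) = 0,
        ∃ n : ℕ, k < n ∧ ∃ x : ZMod n → ℂ, x ≠ 0 ∧
          ∀ g : ZMod n, ∑ s ∈ K, x (g + (s : ZMod n)) = 0,
        ∃ m : ℕ, 2 ≤ m ∧ Polynomial.cyclotomic m ℤ ∣ ∑ s ∈ K, Polynomial.X ^ s,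
        ∃ x : ℤ → ℤ, x ≠ 0 ∧ (∃ p : ℤ, 1 ≤ p ∧ ∀ n : ℤ, x (n + p) = x n) ∧
          ∀ n : ℤ, ∑ s ∈ K, x (n + (s : ℤ)) = 0 ] := by
  tfae_have 1 → 3 := imp_a_c K k hcard hk
  tfae_have 3 → 2 := imp_c_b K k
  tfae_have 2 → 1 := imp_b_a K k
  tfae_have 3 → 4 := imp_c_d K
  tfae_have 4 → 1 := imp_d_a K
  tfae_finish
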